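/- Let G be a finite simple connected graph with at least one median-consistent vertex. Then every edge e belonging to some cycle of G is an edge of an induced 4-cycle of G. -/

import Mathlib

open SimpleGraph

/-- `z` lies on some shortest path connecting `u` and `v` in the graph `G`,
i.e. `z ∈ I(u,v)`. -/
def OnShortestPath {V : Type*} (G : SimpleGraph V) (u v z : V) : Prop :=
  ∃ p : G.Walk u v, p.length = G.dist u v ∧ z ∈ p.support

/-- `m` is a median point of the triple `u, v, w`, i.e. `m ∈ I(u,v) ∩ I(u,w) ∩ I(v,w)`. -/
def IsMedianPt {V : Type*} (G : SimpleGraph V) (u v w m : V) : Prop :=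
  OnShortestPath G u v m ∧ OnShortestPath G u w m ∧ OnShortestPath G v w m

/-- `μ` is a median-consistent (medico) vertex of `G`:
`|I(μ,v,w)| = 1` for all vertices `v, w`. -/
def Medico {V : Type*} (G : SimpleGraph V) (μ : V) : Prop :=
  ∀ v w : V, ∃! m : V, IsMedianPt G μ v w m


section Aux
variable {V : Type*} {G : SimpleGraph V}

lemma osp_iff (hconn : G.Connected) {u v z : V} :
    OnShortestPath G u v z ↔ G.dist u z + G.dist z v = G.dist u v := by
  classical
  constructor
  · rintro ⟨p, hlen, hz⟩
    have h1 : G.dist u z ≤ (p.takeUntil z hz).length := dist_le _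
    have h2 : G.dist z v ≤ (p.dropUntil z hz).length := dist_le _
    have h3 : (p.takeUntil z hz).length + (p.dropUntil z hz).length = p.length := by
      rw [← Walk.length_append, Walk.take_spec]
    have tri : G.dist u v ≤ G.dist u z + G.dist z v := hconn.dist_triangle
    omega
  · intro h
    obtain ⟨p1, hp1⟩ := (hconn.preconnected u z).exists_walk_length_eq_dist
    obtain ⟨p2, hp2⟩ := (hconn.preconnected z v).exists_walk_length_eq_dist
    refine ⟨p1.append p2, ?_, ?_⟩
    · rw [Walk.length_append, hp1, hp2, h]
    · rw [Walk.mem_support_append_iff]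
      exact Or.inl (Walk.end_mem_support p1)

lemma median_ex (hconn : G.Connected) {μ : V} (hμ : Medico G μ) (v w : V) :
    ∃ m : V, G.dist μ m + G.dist m v = G.dist μ v ∧ G.dist μ m + G.dist m w = G.dist μ w ∧
      G.dist v m + G.dist m w = G.dist v w := by
  obtain ⟨m, hm, -⟩ := hμ v w
  exact ⟨m, (osp_iff hconn).1 hm.1, (osp_iff hconn).1 hm.2.1, (osp_iff hconn).1 hm.2.2⟩

lemma level_adj (hconn : G.Connected) {u v : V} (h : G.Adj u v) (μ : V) :
    G.dist μ v ≤ G.dist μ u + 1 := by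
  have := hconn.dist_triangle (u := μ) (v := u) (w := v)
  rw [dist_eq_one_iff_adj.mpr h] at this
  exact this

lemma adj_level_ne (hconn : G.Connected) {μ : V} (hμ : Medico G μ) {u v : V} (h : G.Adj u v) :
    G.dist μ u ≠ G.dist μ v := by
  intro heq
  obtain ⟨m, h1, h2, h3⟩ := median_ex hconn hμ u v
  have hd : G.dist u v = 1 := dist_eq_one_iff_adj.mpr h
  rw [hd] at h3
  have hdc : G.dist u m = G.dist m u := dist_comm ..
  rcases Nat.le_one_iff_eq_zero_or_eq_one.mp (by omega : G.dist u m ≤ 1) with h0 | h01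
  · have : u = m := hconn.dist_eq_zero_iff.mp h0
    subst this
    omega
  · have hm0 : G.dist m v = 0 := by omega
    have hmv : m = v := hconn.dist_eq_zero_iff.mp hm0
    have hvu : G.dist v u = 1 := by rw [SimpleGraph.dist_comm]; exact hd
    rw [← hmv] at hvu
    have hmu : G.dist m u = 1 := by omega
    omega

lemma not_adj_of_dist2 (hconn : G.Connected) {μ u v : V} (h : G.dist μ u + 2 ≤ G.dist μ v) :
    ¬ G.Adj u v := fun hadj => by have := level_adj hconn hadj μ; omega
end Aux
section Aux2
variable {V : Type*} {G : SimpleGraph V}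

lemma quad (hconn : G.Connected) {μ : V} (hμ : Medico G μ) {b x y : V}
    (hbx : G.Adj b x) (hby : G.Adj b y) (hxy : x ≠ y)
    (hx : G.dist μ x + 1 = G.dist μ b) (hy : G.dist μ y + 1 = G.dist μ b) :
    ∃ w : V, G.Adj w x ∧ G.Adj w y ∧ G.dist μ w + 2 = G.dist μ b := by
  obtain ⟨m, h1, h2, h3⟩ := median_ex hconn hμ x y
  have hxy2 : G.dist x y = 2 := by
    have hle : G.dist x y ≤ 2 := by
      have := dist_le (Walk.cons hbx.symm hby.toWalk)
      simpa using this
    have h0 : G.dist x y ≠ 0 := fun h0 => hxy (hconn.dist_eq_zero_iff.mp h0)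
    have h1' : G.dist x y ≠ 1 := by
      intro h1'
      exact adj_level_ne hconn hμ (dist_eq_one_iff_adj.mp h1') (by omega)
    omega
  rw [hxy2] at h3
  have hdc : G.dist x m = G.dist m x := SimpleGraph.dist_comm ..
  have hmx : G.dist m x = 1 := by omega
  have hmy : G.dist m y = 1 := by omega
  refine ⟨m, dist_eq_one_iff_adj.mp hmx, dist_eq_one_iff_adj.mp hmy, by omega⟩

lemma sum_map_le_of_nodup {l₁ l₂ : List V} (f : V → ℕ) (h₁ : l₁.Nodup) (h₂ : l₁ ⊆ l₂) :
    (l₁.map f).sum ≤ (l₂.map f).sum := by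
  classical
  have e1 : (l₁.map f).sum = ∑ x ∈ l₁.toFinset, f x := (List.sum_toFinset f h₁).symm
  have e2 : ∀ l : List V, (∑ x ∈ l.toFinset, f x) ≤ (l.map f).sum := by
    intro l
    induction l with
    | nil => simp
    | cons a t ih =>
      simp only [List.toFinset_cons, List.map_cons, List.sum_cons]
      by_cases ha : a ∈ t.toFinset
      · rw [Finset.insert_eq_self.mpr ha]; omega
      · rw [Finset.sum_insert ha]; omega
  calc (l₁.map f).sum = ∑ x ∈ l₁.toFinset, f x := e1
    _ ≤ ∑ x ∈ l₂.toFinset, f x := Finset.sum_le_sum_of_subset (by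
        intro x hx; exact List.mem_toFinset.mpr (h₂ (List.mem_toFinset.mp hx)))
    _ ≤ (l₂.map f).sum := e2 l₂
end Aux2
lemma main_ind {V : Type*} {G : SimpleGraph V} (hconn : G.Connected) {μ : V} (hμ : Medico G μ)
    {a b : V} (hab : G.Adj a b) :
    ∀ (N : ℕ) (W : G.Walk a b), (W.support.map (G.dist μ)).sum ≤ N → s(a, b) ∉ W.edges →
    ∃ p q : V, G.Adj b p ∧ G.Adj p q ∧ G.Adj q a ∧ ¬ G.Adj a p ∧ ¬ G.Adj b q ∧ a ≠ p ∧ b ≠ q := by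
  classical
  intro N
  induction N with
  | zero =>
    intro W hW hedge
    exfalso
    have ha : G.dist μ a ∈ W.support.map (G.dist μ) :=
      List.mem_map_of_mem W.start_mem_support
    have hb : G.dist μ b ∈ W.support.map (G.dist μ) :=
      List.mem_map_of_mem W.end_mem_support
    have h0 : ∀ x ∈ W.support.map (G.dist μ), (0:ℕ) ≤ x := fun x _ => Nat.zero_le x
    have ha0 : G.dist μ a = 0 := by have := List.single_le_sum h0 _ ha; omega
    have hb0 : G.dist μ b = 0 := by have := List.single_le_sum h0 _ hb; omega
    have h1 : μ = a := hconn.dist_eq_zero_iff.mp ha0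
    have h2 : μ = b := hconn.dist_eq_zero_iff.mp hb0
    exact hab.ne (h1 ▸ h2)
  | succ N ih =>
    intro W hW hedge
    set P : G.Walk a b := W.bypass with hPdef
    have hPp : P.IsPath := W.bypass_isPath
    have hPedge : s(a, b) ∉ P.edges := fun h => hedge (W.edges_bypass_subset h)
    have hPsum : (P.support.map (G.dist μ)).sum ≤ N + 1 :=
      le_trans (sum_map_le_of_nodup _ hPp.support_nodup W.support_bypass_subset) hW
    obtain ⟨z, hzF, hzmax⟩ := Finset.exists_max_image P.support.toFinset (G.dist μ)
      ⟨a, List.mem_toFinset.mpr P.start_mem_support⟩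
    have hzsup : z ∈ P.support := List.mem_toFinset.mp hzF
    have hmax : ∀ v ∈ P.support, G.dist μ v ≤ G.dist μ z :=
      fun v hv => hzmax v (List.mem_toFinset.mpr hv)
    have hfa_le : G.dist μ a ≤ G.dist μ z := hmax a P.start_mem_support
    have hfb_le : G.dist μ b ≤ G.dist μ z := hmax b P.end_mem_support
    have hfab : G.dist μ a ≠ G.dist μ b := adj_level_ne hconn hμ hab
    have hab1 : G.dist μ b ≤ G.dist μ a + 1 := level_adj hconn hab μ
    have hba1 : G.dist μ a ≤ G.dist μ b + 1 := level_adj hconn hab.symm μ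
    by_cases hbK : G.dist μ b = G.dist μ z
    · -- max attained at b
      obtain ⟨p, hbp, Q, hQ⟩ := Walk.not_nil_iff.mp (Walk.not_nil_of_ne hab.ne' (p := P.reverse))
      have hpsup : p ∈ P.support := by
        have h : p ∈ P.reverse.support := by rw [hQ]; simp
        rwa [Walk.support_reverse, List.mem_reverse] at h
      have hpedge : s(b, p) ∈ P.edges := by
        have h : s(b, p) ∈ P.reverse.edges := by rw [hQ]; simp
        rwa [Walk.edges_reverse, List.mem_reverse] at h
      have hpa : p ≠ a := by
        rintro rfl
        exact hPedge (by rwa [Sym2.eq_swap] at hpedge)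
      have hfp_le : G.dist μ p ≤ G.dist μ z := hmax p hpsup
      have hfbp : G.dist μ b ≠ G.dist μ p := adj_level_ne hconn hμ hbp
      have hpb1 : G.dist μ b ≤ G.dist μ p + 1 := level_adj hconn hbp.symm μ
      obtain ⟨q, hqa, hqp, hq2⟩ := quad hconn hμ hab.symm hbp (Ne.symm hpa)
        (by omega) (by omega)
      refine ⟨p, q, hbp, hqp.symm, hqa, ?_, ?_, Ne.symm hpa, ?_⟩
      · exact fun h => adj_level_ne hconn hμ h (by omega)
      · exact fun h => not_adj_of_dist2 hconn (μ := μ) (by omega) h.symm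
      · intro h; rw [h] at hq2; omega
    · by_cases haK : G.dist μ a = G.dist μ z
      · -- max attained at a
        obtain ⟨x, hax, Q, hQ⟩ := Walk.not_nil_iff.mp (Walk.not_nil_of_ne hab.ne (p := P))
        have hxsup : x ∈ P.support := by rw [hQ]; simp
        have hxedge : s(a, x) ∈ P.edges := by rw [hQ]; simp
        have hxb : x ≠ b := by rintro rfl; exact hPedge hxedge
        have hfx_le : G.dist μ x ≤ G.dist μ z := hmax x hxsup
        have hfax : G.dist μ a ≠ G.dist μ x := adj_level_ne hconn hμ hax
        have hxa1 : G.dist μ a ≤ G.dist μ x + 1 := level_adj hconn hax.symm μ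
        obtain ⟨w, hwb, hwx, hw2⟩ := quad hconn hμ hab hax (Ne.symm hxb)
          (by omega) (by omega)
        refine ⟨w, x, hwb.symm, hwx, hax.symm, ?_, ?_, ?_, Ne.symm hxb⟩
        · exact fun h => not_adj_of_dist2 hconn (μ := μ) (by omega) h.symm
        · exact fun h => adj_level_ne hconn hμ h (by omega)
        · intro h; rw [h] at hw2; omega
      · -- max attained at an internal vertex z
        have hza : z ≠ a := fun h => haK (by rw [h])
        have hzb : z ≠ b := fun h => hbK (by rw [h])
        obtain ⟨y, hzy, Q2, hQ2⟩ := Walk.not_nil_iff.mp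
          (Walk.not_nil_of_ne hzb (p := P.dropUntil z hzsup))
        obtain ⟨x, hzx, Q1, hQ1⟩ := Walk.not_nil_iff.mp
          (Walk.not_nil_of_ne hza (p := (P.takeUntil z hzsup).reverse))
        have hxsupP1 : x ∈ (P.takeUntil z hzsup).support := by
          have h : x ∈ (P.takeUntil z hzsup).reverse.support := by rw [hQ1]; simp
          rwa [Walk.support_reverse, List.mem_reverse] at h
        have hxsup : x ∈ P.support := Walk.support_takeUntil_subset P hzsup hxsupP1
        have hysup : y ∈ P.support :=
          Walk.support_dropUntil_subset P hzsup (by rw [hQ2]; simp)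
        have hfx : G.dist μ x + 1 = G.dist μ z := by
          have h1 := hmax x hxsup
          have h2 := adj_level_ne hconn hμ hzx
          have h3 := level_adj hconn hzx.symm μ
          omega
        have hfy : G.dist μ y + 1 = G.dist μ z := by
          have h1 := hmax y hysup
          have h2 := adj_level_ne hconn hμ hzy
          have h3 := level_adj hconn hzy.symm μ
          omega
        have hsupp_split : P.support =
            (P.takeUntil z hzsup).support ++ (P.dropUntil z hzsup).support.tail := by
          conv_lhs => rw [← P.take_spec hzsup]
          rw [Walk.support_append]
        have hnd : ((P.takeUntil z hzsup).support ++ (P.dropUntil z hzsup).support.tail).Nodup := by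
          rw [← hsupp_split]; exact hPp.support_nodup
        have hxy : x ≠ y := by
          have hdisj := List.disjoint_of_nodup_append hnd
          intro h
          apply hdisj hxsupP1
          rw [hQ2, Walk.support_cons, List.tail_cons, h]
          exact Q2.start_mem_support
        obtain ⟨w, hwx, hwy, hw2⟩ := quad hconn hμ hzx hzy hxy hfx hfy
        by_cases h1 : s(a, b) = s(x, w)
        · rcases Sym2.eq_iff.mp h1 with ⟨ha', hb'⟩ | ⟨ha', hb'⟩
          · refine ⟨y, z, ?_, hzy.symm, ?_, ?_, ?_, ?_, ?_⟩
            · rw [hb']; exact hwy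
            · rw [ha']; exact hzx
            · rw [ha']; exact fun h => adj_level_ne hconn hμ h (by omega)
            · rw [hb']; exact fun h => not_adj_of_dist2 hconn (μ := μ) (by omega) h
            · rw [ha']; exact hxy
            · rw [hb']; intro h; rw [h] at hw2; omega
          · refine ⟨z, y, ?_, hzy, ?_, ?_, ?_, ?_, ?_⟩
            · rw [hb']; exact hzx.symm
            · rw [ha']; exact hwy.symm
            · rw [ha']; exact fun h => not_adj_of_dist2 hconn (μ := μ) (by omega) h
            · rw [hb']; exact fun h => adj_level_ne hconn hμ h (by omega)
            · rw [ha']; intro h; rw [h] at hw2; omega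
            · rw [hb']; exact hxy
        · by_cases h2 : s(a, b) = s(w, y)
          · rcases Sym2.eq_iff.mp h2 with ⟨ha', hb'⟩ | ⟨ha', hb'⟩
            · refine ⟨z, x, ?_, hzx, ?_, ?_, ?_, ?_, ?_⟩
              · rw [hb']; exact hzy.symm
              · rw [ha']; exact hwx.symm
              · rw [ha']; exact fun h => not_adj_of_dist2 hconn (μ := μ) (by omega) h
              · rw [hb']; exact fun h => adj_level_ne hconn hμ h (by omega)
              · rw [ha']; intro h; rw [h] at hw2; omega
              · rw [hb']; exact Ne.symm hxy
            · refine ⟨x, z, ?_, hzx.symm, ?_, ?_, ?_, ?_, ?_⟩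
              · rw [hb']; exact hwx
              · rw [ha']; exact hzy
              · rw [ha']; exact fun h => adj_level_ne hconn hμ h (by omega)
              · rw [hb']; exact fun h => not_adj_of_dist2 hconn (μ := μ) (by omega) h
              · rw [ha']; exact Ne.symm hxy
              · rw [hb']; intro h; rw [h] at hw2; omega
          · -- reroute and recurse
            set W' : G.Walk a b := Q1.reverse.append (Walk.cons hwx.symm (Walk.cons hwy Q2))
              with hW'
            have hedge' : s(a, b) ∉ W'.edges := by
              rw [hW', Walk.edges_append, Walk.edges_cons, Walk.edges_cons]
              simp only [List.mem_append, List.mem_cons]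
              rintro (hmem | hmem)
              · apply hPedge
                apply Walk.edges_takeUntil_subset P hzsup
                have hq1 : s(a, b) ∈ Q1.edges := by
                  rwa [Walk.edges_reverse, List.mem_reverse] at hmem
                have hq2' : s(a, b) ∈ (P.takeUntil z hzsup).reverse.edges := by
                  rw [hQ1, Walk.edges_cons]; exact List.mem_cons_of_mem _ hq1
                rwa [Walk.edges_reverse, List.mem_reverse] at hq2'
              · rcases hmem with he1 | he2 | he3
                · exact h1 he1
                · exact h2 he2
                · exact hPedge (Walk.edges_dropUntil_subset P hzsup
                    (by rw [hQ2, Walk.edges_cons]; exact List.mem_cons_of_mem _ he3))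
            have hP1rev : (P.takeUntil z hzsup).support.reverse = z :: Q1.support := by
              rw [← Walk.support_reverse, hQ1, Walk.support_cons]
            have sB : ((P.takeUntil z hzsup).support.map (G.dist μ)).sum =
                G.dist μ z + (Q1.support.map (G.dist μ)).sum := by
              have h := congrArg (fun l => (l.map (G.dist μ)).sum) hP1rev
              simpa [List.map_reverse, List.sum_reverse] using h
            have sA : (P.support.map (G.dist μ)).sum =
                ((P.takeUntil z hzsup).support.map (G.dist μ)).sum +
                  (Q2.support.map (G.dist μ)).sum := by
              rw [hsupp_split, hQ2, Walk.support_cons, List.tail_cons, List.map_append,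
                List.sum_append]
            have sW' : (W'.support.map (G.dist μ)).sum =
                (Q1.support.map (G.dist μ)).sum +
                  (G.dist μ w + (Q2.support.map (G.dist μ)).sum) := by
              rw [hW', Walk.support_append, Walk.support_cons, Walk.support_cons,
                List.tail_cons, Walk.support_reverse, List.map_append, List.sum_append,
                List.map_reverse, List.sum_reverse, List.map_cons, List.sum_cons]
            exact ih W' (by omega) hedge'
def cwalk {V : Type*} (G : SimpleGraph V) {n : ℕ} (c : ZMod n → V)
    (hadj : ∀ i, G.Adj (c i) (c (i + 1))) :
    (m : ℕ) → (j : ZMod n) → G.Walk (c j) (c (j + (m : ZMod n)))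
  | 0, j => Walk.nil.copy rfl (by simp)
  | (m + 1), j => Walk.cons (hadj j) ((cwalk G c hadj m (j + 1)).copy rfl (by push_cast; ring_nf))

lemma cwalk_edges {V : Type*} (G : SimpleGraph V) {n : ℕ} (c : ZMod n → V)
    (hadj : ∀ i, G.Adj (c i) (c (i + 1))) :
    ∀ (m : ℕ) (j : ZMod n), ∀ e ∈ (cwalk G c hadj m j).edges,
      ∃ t : ℕ, t < m ∧ e = s(c (j + (t : ZMod n)), c (j + (t : ZMod n) + 1)) := by
  intro m
  induction m with
  | zero => intro j e he; simp [cwalk] at he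
  | succ m ih =>
    intro j e he
    rw [cwalk, Walk.edges_cons, Walk.edges_copy] at he
    rcases List.mem_cons.mp he with he1 | he2
    · exact ⟨0, by omega, by simpa using he1⟩
    · obtain ⟨t, ht, rfl⟩ := ih (j + 1) e he2
      refine ⟨t + 1, by omega, ?_⟩
      have harg : (j + 1) + (t : ZMod n) = j + ((t + 1 : ℕ) : ZMod n) := by push_cast; ring
      rw [← harg]
/-- In a finite connected graph with at least one medico vertex, every
edge `{a,b}` that belongs to some cycle of `G` is an edge of an induced 4-cycle of `G`
(with vertices `a, b, p, q`, edges `{a,b}, {b,p}, {p,q}, {q,a}` and non-edges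
`{a,p}, {b,q}`). -/
theorem stmt8 {V : Type*} [Fintype V] (G : SimpleGraph V) (hconn : G.Connected)
    (hμ : ∃ μ : V, Medico G μ)
    (a b : V) (hab : G.Adj a b)
    (hcyc : ∃ (n : ℕ) (c : ZMod n → V), 3 ≤ n ∧ Function.Injective c ∧
      (∀ i : ZMod n, G.Adj (c i) (c (i + 1))) ∧
      ∃ i : ZMod n, s(a, b) = s(c i, c (i + 1))) :
    ∃ p q : V, G.Adj b p ∧ G.Adj p q ∧ G.Adj q a ∧
      ¬ G.Adj a p ∧ ¬ G.Adj b q ∧ a ≠ p ∧ b ≠ q := by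
  obtain ⟨μ, hμ⟩ := hμ
  obtain ⟨n, c, hn3, hcinj, hcadj, i, hie⟩ := hcyc
  have hn1 : (1 : ZMod n) + ((n - 1 : ℕ) : ZMod n) = 0 := by
    have h : ((1 + (n - 1) : ℕ) : ZMod n) = ((n : ℕ) : ZMod n) := by congr 1; omega
    rw [Nat.cast_add, ZMod.natCast_self] at h
    simpa using h
  have hend : (i + 1) + ((n - 1 : ℕ) : ZMod n) = i := by rw [add_assoc, hn1, add_zero]
  set W1 : G.Walk (c (i + 1)) (c i) :=
    (cwalk G c hcadj (n - 1) (i + 1)).copy rfl (congrArg c hend) with hW1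
  have hedge1 : s(c (i + 1), c i) ∉ W1.edges := by
    rw [hW1, Walk.edges_copy]
    intro hmem
    obtain ⟨t, ht, hts⟩ := cwalk_edges G c hcadj (n - 1) (i + 1) _ hmem
    rcases Sym2.eq_iff.mp hts with ⟨e1, e2⟩ | ⟨e1, e2⟩
    · have g1 : i + 1 = i + 1 + (t : ZMod n) := hcinj e1
      have gt0 : ((t : ℕ) : ZMod n) = 0 := by linear_combination -g1
      have hdvd : n ∣ t := (ZMod.natCast_eq_zero_iff t n).mp gt0
      have ht0 : t = 0 := Nat.eq_zero_of_dvd_of_lt hdvd (by omega)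
      subst ht0
      have g2 : i = i + 1 + ((0 : ℕ) : ZMod n) + 1 := hcinj e2
      have g2' : ((2 : ℕ) : ZMod n) = 0 := by
        push_cast at g2 ⊢
        linear_combination -g2
      have hdvd2 := (ZMod.natCast_eq_zero_iff 2 n).mp g2'
      have := Nat.le_of_dvd (by norm_num) hdvd2
      omega
    · have g1 : i + 1 = i + 1 + (t : ZMod n) + 1 := hcinj e1
      have g1' : ((t + 1 : ℕ) : ZMod n) = 0 := by
        push_cast
        linear_combination -g1
      have hdvd := (ZMod.natCast_eq_zero_iff (t + 1) n).mp g1'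
      have := Nat.le_of_dvd (by omega) hdvd
      omega
  rcases Sym2.eq_iff.mp hie with ⟨ha, hb⟩ | ⟨ha, hb⟩
  · obtain ⟨p, q, g1, g2, g3, g4, g5, g6, g7⟩ :=
      main_ind hconn hμ hab.symm
        (((W1.copy hb.symm ha.symm).support.map (G.dist μ)).sum)
        (W1.copy hb.symm ha.symm) le_rfl (by
          rw [Walk.edges_copy, hb, ha]
          exact hedge1)
    exact ⟨q, p, g3.symm, g2.symm, g1.symm, g5, g4, g7, g6⟩
  · exact main_ind hconn hμ hab
      (((W1.copy ha.symm hb.symm).support.map (G.dist μ)).sum)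
      (W1.copy ha.symm hb.symm) le_rfl (by
        rw [Walk.edges_copy, ha, hb]
        exact hedge1)
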